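/- For the projected dynamical system ẇ = H(w) - w with H(w) = Proj_S(w - F(w)), the function V̂(w) := -(H(w) - w)ᵀF(w) - (1/2)‖H(w) - w‖² satisfies V̂(w) ≥ 0 for all w ∈ S, with V̂(w) = 0 if and only if H(w) = w. -/

import Mathlib

/-- Fukushima's regularized gap function: if `H w` is the Euclidean projection of
`w - F w` onto the nonempty closed convex set `S`, then
`V̂(w) := -⟨H w - w, F w⟩ - ½‖H w - w‖²` is nonnegative on `S` and vanishes
exactly at fixed points `H w = w`. -/
theorem stmt_10 {d : ℕ} (S : Set (EuclideanSpace ℝ (Fin d))) (hS : S.Nonempty)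
    (hclosed : IsClosed S) (hconv : Convex ℝ S)
    (F H : EuclideanSpace ℝ (Fin d) → EuclideanSpace ℝ (Fin d))
    (hF : Continuous F)
    (hH : ∀ w, H w ∈ S ∧ ∀ y ∈ S, dist (w - F w) (H w) ≤ dist (w - F w) y) :
    ∀ w ∈ S,
      0 ≤ -(inner ℝ (H w - w) (F w) : ℝ) - ‖H w - w‖ ^ 2 / 2 ∧
      (-(inner ℝ (H w - w) (F w) : ℝ) - ‖H w - w‖ ^ 2 / 2 = 0 ↔ H w = w) := by
  intro w hw
  set u := w - F w with hu
  have hHS := (hH w).1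
  have hmin := (hH w).2
  haveI : Nonempty S := ⟨⟨H w, hHS⟩⟩
  have hinf : ‖u - H w‖ = ⨅ y : S, ‖u - y‖ := by
    apply le_antisymm
    · apply le_ciInf
      intro y
      have := hmin y y.2
      simpa [dist_eq_norm] using this
    · have : (⨅ y : S, ‖u - y‖) ≤ ‖u - H w‖ :=
        ciInf_le ⟨0, fun _ ⟨_, h⟩ => h ▸ norm_nonneg _⟩ (⟨H w, hHS⟩ : S)
      exact this
  have hproj : ∀ y ∈ S, (inner ℝ (u - H w) (y - H w) : ℝ) ≤ 0 :=
    (norm_eq_iInf_iff_real_inner_le_zero hconv hHS).mp hinf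
  have key : (inner ℝ (w - F w - H w) (w - H w) : ℝ) ≤ 0 := hproj w hw
  have expand : (inner ℝ (w - F w - H w) (w - H w) : ℝ)
      = ‖w - H w‖ ^ 2 - inner ℝ (F w) (w - H w) := by
    have : w - F w - H w = (w - H w) - F w := by abel
    rw [this, inner_sub_left, real_inner_self_eq_norm_sq]
  have hkey2 : (inner ℝ (F w) (w - H w) : ℝ) ≥ ‖w - H w‖ ^ 2 := by linarith [expand ▸ key]
  have hsym : -(inner ℝ (H w - w) (F w) : ℝ) = inner ℝ (F w) (w - H w) := by
    rw [real_inner_comm]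
    rw [show w - H w = -(H w - w) by abel, inner_neg_right]
  have hnorm : ‖H w - w‖ = ‖w - H w‖ := norm_sub_rev _ _
  constructor
  · rw [hsym, hnorm]
    nlinarith [sq_nonneg ‖w - H w‖]
  · constructor
    · intro h0
      have : ‖w - H w‖ ^ 2 ≤ 0 := by
        rw [hsym, hnorm] at h0; nlinarith
      have : ‖w - H w‖ = 0 := by nlinarith [norm_nonneg (w - H w)]
      have := norm_eq_zero.mp this
      have : w = H w := sub_eq_zero.mp this
      exact this.symm
    · intro h
      rw [h]
      simp
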